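/- Let p be an odd prime, E the elliptic curve y² = x(1-x)(x-p) over Q_p, F = Q_p(E), and v a discrete valuation on F with v(1-x) > 0. Then 1-x is a square in the completion F_v. -/

import Mathlib

open Multiplicative Polynomial Filter

local notation "ℤₘ₀" => WithZero (Multiplicative ℤ)

section Helpers

lemma zm0_exists_pow_lt (γ : ℤₘ₀) (hγ : γ < 1) (δ : ℤₘ₀) (hδ : 0 < δ) :
    ∃ N : ℕ, ∀ n ≥ N, γ ^ n < δ := by
  rcases eq_or_ne γ 0 with rfl | hγ0
  · exact ⟨1, fun n hn => by rw [zero_pow (by omega : n ≠ 0)]; exact hδ⟩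
  obtain ⟨g, rfl⟩ := WithZero.ne_zero_iff_exists.mp hγ0
  obtain ⟨d, rfl⟩ := WithZero.ne_zero_iff_exists.mp hδ.ne'
  rw [WithZero.coe_lt_one] at hγ
  rw [← toAdd_lt, toAdd_one] at hγ
  refine ⟨d.toAdd.natAbs + 1, fun n hn => ?_⟩
  rw [← WithZero.coe_pow, WithZero.coe_lt_coe, ← toAdd_lt, toAdd_pow, nsmul_eq_mul]
  have h1 : g.toAdd ≤ -1 := by omega
  have h2 : (n : ℤ) * g.toAdd ≤ (n : ℤ) * (-1) :=
    mul_le_mul_of_nonneg_left h1 (by positivity)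
  have h3 : -(d.toAdd.natAbs : ℤ) ≤ d.toAdd := by omega
  have h4 : (d.toAdd.natAbs : ℤ) + 1 ≤ (n : ℤ) := by exact_mod_cast hn
  omega

lemma zm0_eq_one_of_pow {x : ℤₘ₀} {k : ℕ} (hk : k ≠ 0) (h : x ^ k = 1) : x = 1 := by
  rcases eq_or_ne x 0 with rfl | hx0
  · rw [zero_pow hk] at h; exact absurd h zero_ne_one
  obtain ⟨g, rfl⟩ := WithZero.ne_zero_iff_exists.mp hx0
  rw [← WithZero.coe_pow, ← WithZero.coe_one, WithZero.coe_inj] at h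
  rw [← WithZero.coe_one, WithZero.coe_inj]
  have h2 := congrArg toAdd h
  rw [toAdd_pow, toAdd_one, nsmul_eq_mul, mul_eq_zero] at h2
  have h3 : g.toAdd = 0 := by
    rcases h2 with h2 | h2
    · omega
    · exact h2
  exact toAdd_eq_zero.mp h3

lemma two_norm_eq_one {p : ℕ} [Fact p.Prime] (hp : Odd p) : ‖(2 : ℚ_[p])‖ = 1 := by
  have hp2 : ¬ ((p : ℤ) ∣ 2) := by
    intro h
    have h' : p ∣ 2 := by exact_mod_cast h
    have := (Nat.prime_dvd_prime_iff_eq (Fact.out) Nat.prime_two).mp h'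
    rw [this] at hp
    simp [Nat.odd_iff] at hp
  have hle : ‖(2 : ℚ_[p])‖ ≤ 1 := by
    have := Padic.norm_int_le_one (p := p) 2
    simpa using this
  have hlt : ¬ ‖(2 : ℚ_[p])‖ < 1 := by
    intro h
    exact hp2 ((Padic.norm_intCast_lt_one_iff (p := p) (k := 2)).mp (by simpa using h))
  exact le_antisymm hle (not_lt.mp hlt)

lemma padic_sqrt {p : ℕ} [Fact p.Prime] (hp : Odd p) (b : ℚ_[p]) (hb : ‖b - 1‖ < 1) :
    ∃ r : ℚ_[p], ‖r - 1‖ < 1 ∧ r ^ 2 = b := by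
  have h2 := two_norm_eq_one hp
  have hbmem : ‖b‖ ≤ 1 := by
    have hh : b = (b - 1) + 1 := by ring
    rw [hh]
    refine le_trans (Padic.nonarchimedean _ _) ?_
    simp [le_of_lt hb]
  set b' : ℤ_[p] := ⟨b, hbmem⟩ with hb'
  have hcoe : ((1 - b' : ℤ_[p]) : ℚ_[p]) = 1 - b := by push_cast; rfl
  have hnorm1 : ‖(1 - b' : ℤ_[p])‖ < 1 := by
    rw [PadicInt.norm_def, hcoe, norm_sub_rev]; exact hb
  have hderiv : ((X ^ 2 - C b') : Polynomial ℤ_[p]).derivative = C 2 * X := by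
    simp [derivative_pow]
  have h2' : ‖(2 : ℤ_[p])‖ = 1 := by
    rw [PadicInt.norm_def]; exact_mod_cast h2
  have hde : ‖((X ^ 2 - C b') : Polynomial ℤ_[p]).derivative.eval 1‖ = 1 := by
    rw [hderiv]; simp [h2']
  have hnorm : ‖(X ^ 2 - C b').eval 1‖ <
      ‖((X ^ 2 - C b') : Polynomial ℤ_[p]).derivative.eval 1‖ ^ 2 := by
    rw [hde, one_pow]
    simpa using hnorm1
  obtain ⟨z, hz1, hz2, _⟩ := hensels_lemma hnorm
  rw [Polynomial.coe_aeval_eq_eval, hde] at hz2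
  refine ⟨(z : ℚ_[p]), ?_, ?_⟩
  · have : ‖z - 1‖ < 1 := hz2
    rw [PadicInt.norm_def] at this
    push_cast at this
    exact this
  · have hz : z ^ 2 = b' := by
      have := hz1
      simp only [Polynomial.coe_aeval_eq_eval, eval_sub, eval_pow, eval_X, eval_C, sub_eq_zero] at this
      exact this
    have := congrArg (fun t : ℤ_[p] => (t : ℚ_[p])) hz
    push_cast at this
    exact this

lemma val_eq_one_of_close {p : ℕ} [Fact p.Prime] (hp : Odd p) {F : Type} [Field F]
    (ι : ℚ_[p] →+* F) (v : Valuation F ℤₘ₀) (b : ℚ_[p]) (hb : ‖b - 1‖ < 1) :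
    v (ι b) = 1 := by
  have hb0 : b ≠ 0 := by
    rintro rfl
    simp at hb
  have key : ∀ n : ℕ, ∃ c : ℚ_[p], ‖c - 1‖ < 1 ∧ c ^ (2 ^ n) = b := by
    intro n
    induction n with
    | zero => exact ⟨b, hb, by simpa using rfl⟩
    | succ n ih =>
      obtain ⟨c, hc1, hc2⟩ := ih
      obtain ⟨r, hr1, hr2⟩ := padic_sqrt hp c hc1
      exact ⟨r, hr1, by rw [pow_succ', pow_mul, hr2, hc2]⟩
  have hvb0 : v (ι b) ≠ 0 := by
    simp [Valuation.ne_zero_iff, _root_.map_ne_zero, hb0]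
  obtain ⟨g, hg⟩ := WithZero.ne_zero_iff_exists.mp hvb0
  suffices hga : g.toAdd = 0 by
    rw [← hg]; exact_mod_cast toAdd_eq_zero.mp hga
  by_contra hga
  obtain ⟨c, hc1, hc2⟩ := key g.toAdd.natAbs
  have hc0 : c ≠ 0 := by
    rintro rfl
    simp at hc1
  have hvc0 : v (ι c) ≠ 0 := by simp [Valuation.ne_zero_iff, _root_.map_ne_zero, hc0]
  obtain ⟨h, hh⟩ := WithZero.ne_zero_iff_exists.mp hvc0
  have : (g : ℤₘ₀) = (h : ℤₘ₀) ^ (2 ^ g.toAdd.natAbs) := by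
    rw [hg, hh, ← map_pow, ← map_pow, hc2]
  rw [← WithZero.coe_pow, WithZero.coe_inj] at this
  have h2 := congrArg toAdd this
  rw [toAdd_pow, nsmul_eq_mul] at h2
  have hdvd : ((2 ^ g.toAdd.natAbs : ℕ) : ℤ) ∣ g.toAdd := ⟨h.toAdd, by exact_mod_cast h2⟩
  have hle := Int.le_of_dvd (abs_pos.mpr hga) ((dvd_abs _ _).mpr hdvd)
  have hlt : g.toAdd.natAbs < 2 ^ g.toAdd.natAbs := Nat.lt_two_pow_self
  have habs : |g.toAdd| = (g.toAdd.natAbs : ℤ) := Int.abs_eq_natAbs _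
  rw [habs] at hle
  have hle' : (2 : ℕ) ^ g.toAdd.natAbs ≤ g.toAdd.natAbs := by exact_mod_cast hle
  omega

lemma val_two_eq_one {p : ℕ} [Fact p.Prime] (hp : Odd p) {F : Type} [Field F]
    (ι : ℚ_[p] →+* F) (v : Valuation F ℤₘ₀) : v (ι 2) = 1 := by
  have hp1 : p - 1 ≠ 0 := by
    have := (Fact.out : p.Prime).two_le; omega
  have h2 : (2 : ZMod p) ≠ 0 := by
    intro h
    have : (p : ℕ) ∣ 2 := by
      have := (ZMod.natCast_eq_zero_iff 2 p).mp (by exact_mod_cast h)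
      exact this
    have := (Nat.prime_dvd_prime_iff_eq (Fact.out) Nat.prime_two).mp this
    rw [this] at hp; simp [Nat.odd_iff] at hp
  have hferm : ((p : ℤ)) ∣ (2 ^ (p - 1) - 1 : ℤ) := by
    have h1 : ((2 : ZMod p)) ^ (p - 1) = 1 := ZMod.pow_card_sub_one_eq_one h2
    have : (((2 ^ (p - 1) - 1 : ℤ)) : ZMod p) = 0 := by push_cast; rw [h1]; ring
    exact (ZMod.intCast_zmod_eq_zero_iff_dvd _ p).mp this
  have hnorm : ‖(2 : ℚ_[p]) ^ (p - 1) - 1‖ < 1 := by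
    have : ((2 ^ (p - 1) - 1 : ℤ) : ℚ_[p]) = (2 : ℚ_[p]) ^ (p - 1) - 1 := by push_cast; ring
    rw [← this]
    exact Padic.norm_intCast_lt_one_iff.mpr hferm
  have := val_eq_one_of_close hp ι v _ hnorm
  rw [map_pow, map_pow] at this
  exact zm0_eq_one_of_pow hp1 this

lemma sq_of_val_sub_one_lt {K : Type} [Field K] [Valued K ℤₘ₀] [CompleteSpace K]
    (h2 : Valued.v (2 : K) = 1) {u : K} (hu : Valued.v (u - 1) < 1) : IsSquare u := by
  set γ : ℤₘ₀ := Valued.v (u - 1) with hγ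
  have h20 : (2 : K) ≠ 0 := by
    intro h; rw [h] at h2; simp at h2
  have h4 : Valued.v (4 : K) = 1 := by
    have : (4 : K) = 2 * 2 := by norm_num
    rw [this, map_mul, h2, mul_one]
  have h40 : (4 : K) ≠ 0 := by
    intro h; rw [h] at h4; simp at h4
  have hγle : ∀ n : ℕ, γ ^ n ≤ 1 := fun n => pow_le_one₀ zero_le' hu.le
  have hγpow : ∀ {m n : ℕ}, m ≤ n → γ ^ n ≤ γ ^ m := by
    intro m n h
    obtain ⟨k, rfl⟩ := Nat.exists_eq_add_of_le h
    rw [pow_add]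
    calc γ ^ m * γ ^ k ≤ γ ^ m * 1 := mul_le_mul_right (hγle k) _
    _ = γ ^ m := mul_one _
  set z : ℕ → K := fun n => Nat.rec (1 : K) (fun _ w => (w ^ 2 + u) / (2 * w)) n with hz
  have hz0 : z 0 = 1 := rfl
  have hzs : ∀ n, z (n + 1) = (z n ^ 2 + u) / (2 * z n) := fun n => rfl
  have inv : ∀ n, Valued.v (z n) = 1 ∧ Valued.v (z n ^ 2 - u) ≤ γ ^ (n + 1) := by
    intro n
    induction n with
    | zero =>
      refine ⟨by rw [hz0, map_one], ?_⟩
      rw [hz0, one_pow, pow_one, Valuation.map_sub_swap]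
    | succ n ih =>
      obtain ⟨hw, hd⟩ := ih
      set w := z n with hwdef
      have hw0 : w ≠ 0 := by
        intro h; rw [h] at hw; simp at hw
      have hdlt : Valued.v (w ^ 2 - u) < 1 := by
        refine lt_of_le_of_lt hd ?_
        calc γ ^ (n + 1) ≤ γ ^ 1 := hγpow (by omega)
        _ = γ := pow_one γ
        _ < 1 := hu
      have hsum : Valued.v (w ^ 2 + u) = 1 := by
        have hid : w ^ 2 + u = 2 * w ^ 2 - (w ^ 2 - u) := by ring
        have hv2w : Valued.v (2 * w ^ 2) = 1 := by
          rw [map_mul, map_pow, h2, hw]; simp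
        rw [hid, sub_eq_add_neg, Valuation.map_add_eq_of_lt_left]
        · exact hv2w
        · rw [Valuation.map_neg, hv2w]; exact hdlt
      constructor
      · rw [hzs n, map_div₀, map_mul, hsum, h2, hw]; simp
      · have hid : z (n + 1) ^ 2 - u = (w ^ 2 - u) ^ 2 / (4 * w ^ 2) := by
          rw [hzs n, ← hwdef]
          field_simp
          ring
        rw [hid, map_div₀, map_pow, map_mul, map_pow, h4, hw]
        simp only [one_pow, mul_one, div_one]
        calc Valued.v (w ^ 2 - u) ^ 2 ≤ (γ ^ (n + 1)) ^ 2 := pow_le_pow_left' hd 2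
        _ = γ ^ ((n + 1) * 2) := (pow_mul γ (n + 1) 2).symm
        _ ≤ γ ^ (n + 2) := hγpow (by omega)
  have hdiff : ∀ n, Valued.v (z (n + 1) - z n) ≤ γ ^ (n + 1) := by
    intro n
    obtain ⟨hw, hd⟩ := inv n
    have hw0 : z n ≠ 0 := by intro h; rw [h] at hw; simp at hw
    have hid : z (n + 1) - z n = (u - z n ^ 2) / (2 * z n) := by
      rw [hzs n]; field_simp; ring
    rw [hid, map_div₀, map_mul, h2, hw, Valuation.map_sub_swap]
    simpa using hd
  have htel : ∀ n k, Valued.v (z (n + k) - z n) ≤ γ ^ (n + 1) := by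
    intro n k
    induction k with
    | zero => simp
    | succ k ih =>
      have hsplit : z (n + (k + 1)) - z n = (z (n + k + 1) - z (n + k)) + (z (n + k) - z n) := by
        have : n + (k + 1) = n + k + 1 := by omega
        rw [this]; ring
      rw [hsplit]
      refine le_trans (Valued.v.map_add _ _) (max_le ?_ ih)
      exact le_trans (hdiff (n + k)) (hγpow (by omega))
  have hcauchy : CauchySeq z := by
    rw [(Valued.hasBasis_uniformity K ℤₘ₀).cauchySeq_iff]
    intro δ _
    obtain ⟨N, hN⟩ := zm0_exists_pow_lt γ hu (MonoidWithZeroHom.ValueGroup₀.embedding δ.1)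
      (zero_lt_iff.mpr ((_root_.map_ne_zero _).mpr δ.ne_zero))
    refine ⟨N, fun m hm n hn => ?_⟩
    simp only [Set.mem_setOf_eq, Valuation.restrict_lt_iff_lt_embedding]
    rcases le_total m n with h | h
    · obtain ⟨k, rfl⟩ := Nat.exists_eq_add_of_le h
      exact lt_of_le_of_lt (htel m k) (hN (m + 1) (by omega))
    · rw [Valuation.map_sub_swap]
      obtain ⟨k, rfl⟩ := Nat.exists_eq_add_of_le h
      exact lt_of_le_of_lt (htel n k) (hN (n + 1) (by omega))
  obtain ⟨L, hL⟩ := cauchySeq_tendsto_of_complete hcauchy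
  have htendL : Tendsto (fun n => z n ^ 2 - u) atTop (nhds (L ^ 2 - u)) :=
    (hL.pow 2).sub tendsto_const_nhds
  have htend0 : Tendsto (fun n => z n ^ 2 - u) atTop (nhds 0) := by
    rw [(Valued.hasBasis_nhds_zero K ℤₘ₀).tendsto_right_iff]
    intro δ _
    obtain ⟨N, hN⟩ := zm0_exists_pow_lt γ hu (MonoidWithZeroHom.ValueGroup₀.embedding δ.1)
      (zero_lt_iff.mpr ((_root_.map_ne_zero _).mpr δ.ne_zero))
    filter_upwards [eventually_ge_atTop N] with n hn
    exact (Valuation.restrict_lt_iff_lt_embedding _).mpr (lt_of_le_of_lt (inv n).2 (hN (n + 1) (by omega)))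
  have hL2 : L ^ 2 = u := by
    have := tendsto_nhds_unique htendL htend0
    rwa [sub_eq_zero] at this
  exact ⟨L, by rw [← hL2, sq]⟩

lemma val_intCast_le_one {F : Type} [Field F] (v : Valuation F ℤₘ₀) (n : ℤ) :
    v (n : F) ≤ 1 := by
  have hnat : ∀ m : ℕ, v ((m : F)) ≤ 1 := by
    intro m
    induction m with
    | zero => simp
    | succ m ih =>
      push_cast
      exact le_trans (v.map_add _ _) (max_le ih (by simp))
  rcases n.natAbs_eq with h | h
  · rw [h, Int.cast_natCast]; exact hnat _
  · rw [h, Int.cast_neg, Int.cast_natCast, Valuation.map_neg]; exact hnat _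


end Helpers

/-- Let `p` be an odd prime, `E` the elliptic curve `y² = x(1-x)(x-p)` over `ℚ_p`,
`F = ℚ_p(E)` its function field (the quadratic extension of `ℚ_p(x)` generated by `y`),
and `v` a nontrivial rank-one discrete valuation on `F` (value group `ℤ`; here written
multiplicatively, with values in `ℤₘ₀ = WithZero (Multiplicative ℤ)` and `v` surjective),
with completion `F_v` (a complete valued field containing `F` as a dense subfield, whose
valuation extends `v`).  If `v(1-x) > 0` (multiplicatively: `v(1-x) < 1`), then `1 - x`
is a square in `F_v`. -/
theorem one_sub_x_square_in_completion_of_pos_val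
    (p : ℕ) [Fact p.Prime] (hp : Odd p)
    (F : Type) [Field F] [Algebra (RatFunc ℚ_[p]) F]
    (y : F)
    (hy : y ^ 2 = algebraMap (RatFunc ℚ_[p]) F
      (RatFunc.X * (1 - RatFunc.X) * (RatFunc.X - RatFunc.C (p : ℚ_[p]))))
    (hgen : Algebra.adjoin (RatFunc ℚ_[p]) {y} = ⊤)
    (hdeg : Module.finrank (RatFunc ℚ_[p]) F = 2)
    (v : Valuation F (WithZero (Multiplicative ℤ)))
    (hv : Function.Surjective v)
    (Fv : Type) [Field Fv] [Valued Fv (WithZero (Multiplicative ℤ))] [CompleteSpace Fv]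
    [Algebra F Fv]
    (hcompat : ∀ f : F, Valued.v (algebraMap F Fv f) = v f)
    (hdense : DenseRange (algebraMap F Fv))
    (hpos : v (algebraMap (RatFunc ℚ_[p]) F (1 - RatFunc.X)) < 1) :
    IsSquare (algebraMap F Fv (algebraMap (RatFunc ℚ_[p]) F (1 - RatFunc.X))) := by
  set A := algebraMap (RatFunc ℚ_[p]) F with hA
  set ι : ℚ_[p] →+* F := (A : RatFunc ℚ_[p] →+* F).comp (algebraMap ℚ_[p] (RatFunc ℚ_[p]))
    with hι
  set e : F := A (1 - RatFunc.X) with he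
  set B := algebraMap F Fv with hB
  -- basic algebra facts
  have hAX : A RatFunc.X = 1 - e := by
    rw [he, map_sub, map_one]; ring
  have hAC : A (RatFunc.C ((p : ℚ_[p]))) = ((p : ℕ) : F) := by
    have h1 : A (RatFunc.C ((p : ℚ_[p]))) = ι ((p : ℚ_[p])) := by
      rw [hι, RingHom.comp_apply, RatFunc.algebraMap_eq_C]
    rw [h1, map_natCast]
  have hyt : y ^ 2 = e * ((1 - e) * ((1 - e) - ((p : ℕ) : F))) := by
    rw [hy, map_mul, map_mul, map_sub A RatFunc.X (RatFunc.C _), hAX, hAC, ← he]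
    ring
  set P : F := ((p : ℕ) : F) with hP
  set t : F := (1 - e) * ((1 - e) - P) with ht
  -- the square root of 1 - p in ℚ_p
  have hnp : ‖((1 : ℚ_[p]) - (p : ℚ_[p])) - 1‖ < 1 := by
    have : ((1 : ℚ_[p]) - (p : ℚ_[p])) - 1 = -((p : ℚ_[p])) := by ring
    rw [this, norm_neg]
    exact Padic.norm_p_lt_one
  obtain ⟨s, hs1, hs2⟩ := padic_sqrt hp _ hnp
  have hs0 : s ≠ 0 := by
    intro h
    rw [h] at hs1
    simp at hs1
  have hιs0 : ι s ≠ 0 := by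
    simp [_root_.map_ne_zero, hs0]
  have hvs : v (ι s) = 1 := val_eq_one_of_close hp ι v s hs1
  have hι1p : ι ((1 : ℚ_[p]) - (p : ℚ_[p])) = 1 - P := by
    rw [map_sub, map_one, map_natCast]
  have hvnp : v (1 - P) = 1 := by
    rw [← hι1p, ← hs2, map_pow, map_pow, hvs, one_pow]
  -- v e < 1
  have hve : v e < 1 := hpos
  -- v (t - (1 - P)) < 1
  have hts : t - (1 - P) = e * (e - 2 + P) := by rw [ht]; ring
  have hsmall : v (t - (1 - P)) < 1 := by
    rw [hts, map_mul]
    have h1 : v (e - 2 + P) ≤ 1 := by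
      have hid : e - 2 + P = e + (((p : ℤ) - 2 : ℤ) : F) := by push_cast; ring
      rw [hid]
      exact le_trans (v.map_add _ _) (max_le hve.le (val_intCast_le_one v _))
    calc v e * v (e - 2 + P) ≤ v e * 1 := mul_le_mul_right h1 _
    _ = v e := mul_one _
    _ < 1 := hve
  have hvt : v t = 1 := by
    have hid : t = (t - (1 - P)) + (1 - P) := by ring
    rw [hid, Valuation.map_add_eq_of_lt_right]
    · exact hvnp
    · rw [hvnp]; exact hsmall
  have ht0 : t ≠ 0 := by
    intro h
    rw [h] at hvt; simp at hvt
  -- u = t / (ι s)^2 has v (u - 1) < 1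
  set u : F := t / (ι s) ^ 2 with hu
  have h1P0 : (1 : F) - P ≠ 0 := by
    intro h
    rw [h] at hvnp; simp at hvnp
  have hvu : v (u - 1) < 1 := by
    have hιs2 : (ι s) ^ 2 = 1 - P := by rw [← map_pow, hs2, hι1p]
    have hid : u - 1 = (t - (1 - P)) * ((1 : F) - P)⁻¹ := by
      rw [hu, hιs2]
      field_simp
    rw [hid, map_mul, map_inv₀, hvnp, inv_one, mul_one]
    exact hsmall
  -- pass to Fv
  have h2F : (2 : F) = ι 2 := by rw [map_ofNat]
  have hB2 : Valued.v ((2 : Fv)) = 1 := by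
    have : (2 : Fv) = B (2 : F) := by rw [map_ofNat]
    rw [this, hcompat, h2F]
    exact val_two_eq_one hp ι v
  have hBu : Valued.v (B u - 1) < 1 := by
    have : B u - 1 = B (u - 1) := by rw [map_sub, map_one]
    rw [this, hcompat]
    exact hvu
  obtain ⟨c, hc⟩ := sq_of_val_sub_one_lt hB2 hBu
  -- final assembly
  have hinj : Function.Injective B := B.injective
  have hu0 : u ≠ 0 := by
    rw [hu]
    exact div_ne_zero ht0 (pow_ne_zero 2 hιs0)
  have hc0 : c ≠ 0 := by
    intro h
    rw [h, mul_zero] at hc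
    exact hu0 (hinj (by rw [hc, map_zero]))
  have hBιs0 : B (ι s) ≠ 0 := by
    simp [_root_.map_ne_zero, hιs0]
  have htu : t = u * (ι s) ^ 2 := by
    rw [hu, div_mul_cancel₀]
    exact pow_ne_zero 2 hιs0
  have hyt2 : B y ^ 2 = B e * (B u * B (ι s) ^ 2) := by
    have h1 : y ^ 2 = e * t := by rw [hyt, ht]
    have := congrArg B (h1.trans (by rw [htu]))
    rw [map_pow, map_mul, map_mul, map_pow] at this
    exact this
  have hcsq : c ^ 2 = B u := (sq c).trans hc.symm
  have hcb0 : c * B (ι s) ≠ 0 := mul_ne_zero hc0 hBιs0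
  have key : B y ^ 2 = B e * (c * B (ι s)) ^ 2 := by
    rw [hyt2, mul_pow, hcsq]
  refine ⟨B y / (c * B (ι s)), ?_⟩
  rw [div_mul_div_comm, ← sq, ← sq, key, mul_div_assoc,
    div_self (pow_ne_zero 2 hcb0), mul_one]
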